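/- Up to isomorphism there are exactly 6 commutative associative real algebra structures on a 2-dimensional real vector space. -/

import Mathlib

/-- A commutative associative algebra structure on `ℝ²`. -/
def IsCommAssoc (μ : (ℝ × ℝ) →ₗ[ℝ] (ℝ × ℝ) →ₗ[ℝ] (ℝ × ℝ)) : Prop :=
  (∀ x y, μ x y = μ y x) ∧ (∀ x y z, μ (μ x y) z = μ x (μ y z))

/-- Two algebra structures on `ℝ²` are equivalent if they are conjugate under
`GL(2,ℝ)`. -/
def AlgEquivalent (μ ν : (ℝ × ℝ) →ₗ[ℝ] (ℝ × ℝ) →ₗ[ℝ] (ℝ × ℝ)) : Prop :=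
  ∃ f : (ℝ × ℝ) ≃ₗ[ℝ] (ℝ × ℝ), ∀ x y, ν x y = f.symm (μ (f x) (f y))

namespace Stmt5Aux

abbrev V2 := ℝ × ℝ
abbrev Mu := V2 →ₗ[ℝ] V2 →ₗ[ℝ] V2

def mkBil (p : ℝ → ℝ → ℝ → ℝ → ℝ × ℝ)
    (h1 : ∀ a b c d a' b' : ℝ, p (a+a') (b+b') c d = p a b c d + p a' b' c d)
    (h2 : ∀ (r a b c d : ℝ), p (r*a) (r*b) c d = r • p a b c d)
    (h3 : ∀ a b c d c' d' : ℝ, p a b (c+c') (d+d') = p a b c d + p a b c' d')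
    (h4 : ∀ (r a b c d : ℝ), p a b (r*c) (r*d) = r • p a b c d) : Mu :=
  LinearMap.mk₂ ℝ (fun x y => p x.1 x.2 y.1 y.2)
    (fun m n o => by simpa using h1 m.1 m.2 o.1 o.2 n.1 n.2)
    (fun r m n => by simpa using h2 r m.1 m.2 n.1 n.2)
    (fun m n o => by simpa using h3 m.1 m.2 n.1 n.2 o.1 o.2)
    (fun r m n => by simpa using h4 r m.1 m.2 n.1 n.2)

noncomputable def rep0 : Mu := 0
noncomputable def rep1 : Mu := mkBil (fun a _ c _ => (0, a*c))
  (by intros; simp [Prod.ext_iff]; ring) (by intros; simp [Prod.ext_iff]; ring)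
  (by intros; simp [Prod.ext_iff]; ring) (by intros; simp [Prod.ext_iff]; ring)
noncomputable def rep2 : Mu := mkBil (fun a _ c _ => (a*c, 0))
  (by intros; simp [Prod.ext_iff]; ring) (by intros; simp [Prod.ext_iff]; ring)
  (by intros; simp [Prod.ext_iff]; ring) (by intros; simp [Prod.ext_iff]; ring)
noncomputable def rep3 : Mu := mkBil (fun a b c d => (a*c, b*d))
  (by intros; simp [Prod.ext_iff]; exact ⟨by ring, by ring⟩)
  (by intros; simp [Prod.ext_iff]; exact ⟨by ring, by ring⟩)
  (by intros; simp [Prod.ext_iff]; exact ⟨by ring, by ring⟩)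
  (by intros; simp [Prod.ext_iff]; exact ⟨by ring, by ring⟩)
noncomputable def rep4 : Mu := mkBil (fun a b c d => (a*c - b*d, a*d + b*c))
  (by intros; simp [Prod.ext_iff]; exact ⟨by ring, by ring⟩)
  (by intros; simp [Prod.ext_iff]; exact ⟨by ring, by ring⟩)
  (by intros; simp [Prod.ext_iff]; exact ⟨by ring, by ring⟩)
  (by intros; simp [Prod.ext_iff]; exact ⟨by ring, by ring⟩)
noncomputable def rep5 : Mu := mkBil (fun a b c d => (a*c, a*d + b*c))
  (by intros; simp [Prod.ext_iff]; exact ⟨by ring, by ring⟩)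
  (by intros; simp [Prod.ext_iff]; exact ⟨by ring, by ring⟩)
  (by intros; simp [Prod.ext_iff]; exact ⟨by ring, by ring⟩)
  (by intros; simp [Prod.ext_iff]; exact ⟨by ring, by ring⟩)

@[simp] lemma rep1_apply (x y : V2) : rep1 x y = (0, x.1*y.1) := rfl
@[simp] lemma rep2_apply (x y : V2) : rep2 x y = (x.1*y.1, 0) := rfl
@[simp] lemma rep3_apply (x y : V2) : rep3 x y = (x.1*y.1, x.2*y.2) := rfl
@[simp] lemma rep4_apply (x y : V2) : rep4 x y = (x.1*y.1 - x.2*y.2, x.1*y.2 + x.2*y.1) := rfl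
@[simp] lemma rep5_apply (x y : V2) : rep5 x y = (x.1*y.1, x.1*y.2 + x.2*y.1) := rfl

def mkLin (u v : V2) : V2 →ₗ[ℝ] V2 where
  toFun p := p.1 • u + p.2 • v
  map_add' p q := by simp [add_smul]; abel
  map_smul' c p := by simp [smul_smul, smul_add]

@[simp] lemma mkLin_apply (u v : V2) (p : V2) : mkLin u v p = p.1 • u + p.2 • v := rfl

lemma equiv_of_table (μ ν : Mu) (u v : V2)
    (hind : ∀ a b : ℝ, a • u + b • v = (0:V2) → a = 0 ∧ b = 0)
    (h : ∀ a b c d : ℝ, μ (a•u+b•v) (c•u+d•v)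
        = (ν (a,b) (c,d)).1 • u + (ν (a,b) (c,d)).2 • v) :
    AlgEquivalent μ ν := by
  have hinj : Function.Injective (mkLin u v) := by
    rw [injective_iff_map_eq_zero]
    intro p hp
    obtain ⟨h1, h2⟩ := hind p.1 p.2 hp
    exact Prod.ext h1 h2
  have hsurj := (LinearMap.injective_iff_surjective).mp hinj
  refine ⟨LinearEquiv.ofBijective (mkLin u v) ⟨hinj, hsurj⟩, fun x y => ?_⟩
  have key : μ (mkLin u v x) (mkLin u v y) = mkLin u v (ν x y) := by
    simpa using h x.1 x.2 y.1 y.2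
  show ν x y = (LinearEquiv.ofBijective (mkLin u v) ⟨hinj, hsurj⟩).symm _
  rw [show ((LinearEquiv.ofBijective (mkLin u v) ⟨hinj, hsurj⟩) x : V2) = mkLin u v x from rfl,
    show ((LinearEquiv.ofBijective (mkLin u v) ⟨hinj, hsurj⟩) y : V2) = mkLin u v y from rfl,
    key, show mkLin u v (ν x y) = (LinearEquiv.ofBijective (mkLin u v) ⟨hinj, hsurj⟩) (ν x y) from rfl,
    LinearEquiv.symm_apply_apply]

lemma expand (μ : Mu) (hc : ∀ x y, μ x y = μ y x) (u v : V2) (a b c d : ℝ) :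
    μ (a•u+b•v) (c•u+d•v)
      = (a*c) • μ u u + (a*d+b*c) • μ u v + (b*d) • μ v v := by
  simp only [map_add, map_smul, LinearMap.add_apply, LinearMap.smul_apply, hc v u]
  module

lemma span2 (x y : V2) (hx : x ≠ 0)
    (hind : ∀ a b : ℝ, a • x + b • y = (0:V2) → a = 0 ∧ b = 0) (z : V2) :
    ∃ a b : ℝ, z = a • x + b • y := by
  set D := x.1 * y.2 - x.2 * y.1 with hD
  have hDne : D ≠ 0 := by
    intro h0
    have h1 := hind y.2 (-x.2) (by
      simp [Prod.ext_iff]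
      constructor <;> nlinarith [h0])
    have h2 := hind y.1 (-x.1) (by
      simp [Prod.ext_iff]
      constructor <;> nlinarith [h0])
    exact hx (Prod.ext (by simpa using h2.2) (by simpa using h1.2))
  refine ⟨(z.1 * y.2 - z.2 * y.1)/D, (x.1 * z.2 - x.2 * z.1)/D, ?_⟩
  apply Prod.ext <;> simp <;> field_simp <;> ring

section
variable (μ : Mu) (hcomm : ∀ x y, μ x y = μ y x)
  (hassoc : ∀ x y z, μ (μ x y) z = μ x (μ y z))

include hcomm in
lemma polarize (h' : ∀ x, μ x x = 0) : μ = 0 := by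
  have hall : ∀ x y : V2, μ x y = 0 := by
    intro x y
    have h2 := h' (x + y)
    simp only [map_add, LinearMap.add_apply, h' x, h' y] at h2
    rw [hcomm y x] at h2
    have h3 : (2:ℝ) • μ x y = 0 := by
      rw [two_smul]
      linear_combination (norm := abel) h2
    exact (smul_eq_zero.mp h3).resolve_left (by norm_num)
  exact LinearMap.ext fun x => LinearMap.ext fun y => by simpa using hall x y

include hcomm hassoc in
lemma no_idem (h0 : μ ≠ 0)
    (hid : ¬ ∃ e : V2, e ≠ 0 ∧ μ e e = e) : AlgEquivalent μ rep1 := by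
  have hex : ∃ x : V2, μ x x ≠ 0 := by
    by_contra h'
    push_neg at h'
    exact h0 (polarize μ hcomm h')
  obtain ⟨x, hxx⟩ := hex
  obtain ⟨y, hy⟩ : ∃ y, μ x x = y := ⟨_, rfl⟩
  have hy0 : y ≠ 0 := hy ▸ hxx
  have hx0 : x ≠ 0 := by
    intro h; apply hxx; rw [h]; simp
  have hind : ∀ a b : ℝ, a • x + b • y = (0:V2) → a = 0 ∧ b = 0 := by
    intro a b hab
    by_cases hb : b = 0
    · subst hb
      simp only [zero_smul, add_zero] at hab
      rcases smul_eq_zero.mp hab with h | h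
      · exact ⟨h, rfl⟩
      · exact absurd h hx0
    · exfalso
      have h1 : b • y = (-a) • x := by
        rw [neg_smul]; exact eq_neg_of_add_eq_zero_right hab
      have hyx : y = (b⁻¹ * -a) • x := by
        rw [← smul_smul, ← h1, smul_smul, inv_mul_cancel₀ hb, one_smul]
      have hc0 : b⁻¹ * -a ≠ 0 := by
        intro h; apply hy0; rw [hyx, h, zero_smul]
      have ha0 : a ≠ 0 := by
        intro h; exact hc0 (by rw [h]; ring)
      apply hid
      refine ⟨(b⁻¹ * -a)⁻¹ • x, smul_ne_zero (inv_ne_zero hc0) hx0, ?_⟩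
      simp only [map_smul, LinearMap.smul_apply]
      rw [hy, hyx]
      match_scalars
      field_simp
  obtain ⟨α, β, hx3⟩ := span2 x y hx0 hind (μ x y)
  have hyy : μ y y = α • y + β • μ x y := by
    calc μ y y = μ (μ x x) y := by rw [hy]
    _ = μ x (μ x y) := hassoc x x y
    _ = μ x (α • x + β • y) := by rw [← hx3]
    _ = α • y + β • μ x y := by rw [map_add, map_smul, map_smul, hy]
  have hα : α = 0 := by
    by_contra hα
    apply hid
    obtain ⟨u, hu⟩ : ∃ u : V2, α⁻¹ • (y - β • x) = u := ⟨_, rfl⟩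
    have hux : μ u x = x := by
      rw [← hu]
      simp only [map_smul, map_sub, LinearMap.smul_apply, LinearMap.sub_apply]
      rw [hcomm y x, hx3, hy]
      match_scalars <;> field_simp <;> ring
    have huy : μ u y = y := by
      rw [← hu]
      simp only [map_smul, map_sub, LinearMap.smul_apply, LinearMap.sub_apply]
      rw [hyy, hcomm x y]
      match_scalars <;> field_simp <;> ring
    have huu : μ u u = u := by
      nth_rewrite 1 [← hu]
      simp only [map_smul, map_sub, LinearMap.smul_apply, LinearMap.sub_apply]
      rw [hcomm y u, hcomm x u, huy, hux, hu]
    have hu0 : u ≠ 0 := by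
      intro h
      apply hx0
      rw [← hux, h]; simp
    exact ⟨u, hu0, huu⟩
  rw [hα, zero_smul, zero_add] at hx3
  have hβ : β = 0 := by
    by_contra hβ
    apply hid
    have hyy2 : μ y y = (β*β) • y := by
      rw [hyy, hα, zero_smul, zero_add, hx3, smul_smul]
    refine ⟨(β*β)⁻¹ • y, smul_ne_zero (inv_ne_zero (mul_ne_zero hβ hβ)) hy0, ?_⟩
    simp only [map_smul, LinearMap.smul_apply]
    rw [hyy2]
    match_scalars
    field_simp
  rw [hβ, zero_smul] at hx3
  have hyy0 : μ y y = 0 := by rw [hyy, hα, hβ, hx3]; simp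
  apply equiv_of_table μ rep1 x y hind
  intro a b c d
  rw [expand μ hcomm, hy, hx3, hyy0, rep1_apply]
  match_scalars <;> ring

end

section
variable (μ : Mu) (hcomm : ∀ x y, μ x y = μ y x)
  (hassoc : ∀ x y z, μ (μ x y) z = μ x (μ y z))

include hcomm hassoc in
lemma idem_unital (e : V2) (he0 : e ≠ 0) (hee : μ e e = e) (hu : ∀ x, μ e x = x) :
    AlgEquivalent μ rep3 ∨ AlgEquivalent μ rep4 ∨ AlgEquivalent μ rep5 := by
  obtain ⟨v, hv⟩ : ∃ v : V2, ((-e.2, e.1) : V2) = v := ⟨_, rfl⟩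
  have hind_ev : ∀ a b : ℝ, a • e + b • v = (0:V2) → a = 0 ∧ b = 0 := by
    intro a b hab
    rw [← hv, Prod.ext_iff] at hab
    simp only [Prod.fst_add, Prod.snd_add, Prod.smul_fst, Prod.smul_snd, smul_eq_mul,
      Prod.fst_zero, Prod.snd_zero] at hab
    obtain ⟨h1, h2⟩ := hab
    have he1 : (a^2+b^2) * e.1 = 0 := by linear_combination a*h1 + b*h2
    have he2 : (a^2+b^2) * e.2 = 0 := by linear_combination a*h2 - b*h1
    have hs : a^2 + b^2 = 0 := by
      by_contra hs
      exact he0 (Prod.ext ((mul_eq_zero.mp he1).resolve_left hs)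
        ((mul_eq_zero.mp he2).resolve_left hs))
    constructor <;> nlinarith [sq_nonneg a, sq_nonneg b]
  obtain ⟨γ, δ, hvv⟩ := span2 e v he0 hind_ev (μ v v)
  obtain ⟨w, hw⟩ : ∃ w : V2, v - (δ/2) • e = w := ⟨_, rfl⟩
  have hind_ew : ∀ a b : ℝ, a • e + b • w = (0:V2) → a = 0 ∧ b = 0 := by
    intro a b hab
    have h' : (a - b*(δ/2)) • e + b • v = (0:V2) := by
      rw [← hab, ← hw]; module
    obtain ⟨h1, h2⟩ := hind_ev _ _ h'
    subst h2
    constructor <;> linarith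
  have hew : μ e w = w := hu w
  have hww : μ w w = (γ + δ^2/4) • e := by
    rw [← hw]
    simp only [map_sub, map_smul, LinearMap.sub_apply, LinearMap.smul_apply]
    rw [hcomm v e, hu v, hee, hvv]
    module
  obtain ⟨c, hc⟩ : ∃ c : ℝ, γ + δ^2/4 = c := ⟨_, rfl⟩
  rw [hc] at hww
  rcases lt_trichotomy c 0 with hcneg | hc0 | hcpos
  · -- rep4 : ℂ
    right; left
    have hc0 : c ≠ 0 := ne_of_lt hcneg
    obtain ⟨r, hr⟩ : ∃ r : ℝ, Real.sqrt (-c) = r := ⟨_, rfl⟩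
    have hr2 : r^2 = -c := by rw [← hr]; exact Real.sq_sqrt (by linarith)
    have hr0 : r ≠ 0 := by intro h; rw [h] at hr2; simp at hr2; linarith
    obtain ⟨w', hw'⟩ : ∃ w' : V2, r⁻¹ • w = w' := ⟨_, rfl⟩
    have hew' : μ e w' = w' := hu w'
    have hww' : μ w' w' = (-1 : ℝ) • e := by
      rw [← hw']
      simp only [map_smul, LinearMap.smul_apply]
      rw [hww]
      match_scalars
      field_simp
      linear_combination hr2
    have hind_ew' : ∀ a b : ℝ, a • e + b • w' = (0:V2) → a = 0 ∧ b = 0 := by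
      intro a b hab
      have h' : a • e + (b * r⁻¹) • w = (0:V2) := by rw [← hab, ← hw']; module
      obtain ⟨h1, h2⟩ := hind_ew _ _ h'
      exact ⟨h1, by field_simp at h2; simpa using h2⟩
    apply equiv_of_table μ rep4 e w' hind_ew'
    intro a b c' d
    rw [expand μ hcomm, hee, hew', hww', rep4_apply]
    match_scalars <;> ring
  · -- rep5 : dual numbers
    right; right
    rw [hc0, zero_smul] at hww
    apply equiv_of_table μ rep5 e w hind_ew
    intro a b c' d
    rw [expand μ hcomm, hee, hew, hww, rep5_apply]
    match_scalars <;> ring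
  · -- rep3 : ℝ × ℝ
    left
    have hc0 : c ≠ 0 := ne_of_gt hcpos
    obtain ⟨r, hr⟩ : ∃ r : ℝ, Real.sqrt c = r := ⟨_, rfl⟩
    have hr2 : r^2 = c := by rw [← hr]; exact Real.sq_sqrt (by linarith)
    have hr0 : r ≠ 0 := by intro h; rw [h] at hr2; simp at hr2; linarith
    obtain ⟨w', hw'⟩ : ∃ w' : V2, r⁻¹ • w = w' := ⟨_, rfl⟩
    have hew' : μ e w' = w' := hu w'
    have hww' : μ w' w' = e := by
      rw [← hw']
      simp only [map_smul, LinearMap.smul_apply]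
      rw [hww]
      match_scalars
      field_simp
      linear_combination -hr2
    have hind_ew' : ∀ a b : ℝ, a • e + b • w' = (0:V2) → a = 0 ∧ b = 0 := by
      intro a b hab
      have h' : a • e + (b * r⁻¹) • w = (0:V2) := by rw [← hab, ← hw']; module
      obtain ⟨h1, h2⟩ := hind_ew _ _ h'
      exact ⟨h1, by field_simp at h2; simpa using h2⟩
    obtain ⟨p, hp⟩ : ∃ p : V2, (1/2 : ℝ) • e + (1/2 : ℝ) • w' = p := ⟨_, rfl⟩
    obtain ⟨q, hq⟩ : ∃ q : V2, (1/2 : ℝ) • e + (-(1/2) : ℝ) • w' = q := ⟨_, rfl⟩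
    have hpp : μ p p = p := by
      rw [← hp, expand μ hcomm, hee, hew', hww']
      match_scalars <;> ring
    have hqq : μ q q = q := by
      rw [← hq, expand μ hcomm, hee, hew', hww']
      match_scalars <;> ring
    have hpq : μ p q = 0 := by
      rw [← hp, ← hq, expand μ hcomm, hee, hew', hww']
      match_scalars <;> ring
    have hind_pq : ∀ a b : ℝ, a • p + b • q = (0:V2) → a = 0 ∧ b = 0 := by
      intro a b hab
      have h' : ((a+b)/2) • e + ((a-b)/2) • w' = (0:V2) := by
        rw [← hab, ← hp, ← hq]; module
      obtain ⟨h1, h2⟩ := hind_ew' _ _ h'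
      constructor <;> linarith
    apply equiv_of_table μ rep3 p q hind_pq
    intro a b c' d
    rw [expand μ hcomm, hpp, hpq, hqq, rep3_apply]
    match_scalars <;> ring

include hcomm hassoc in
lemma idem_nonunital (e : V2) (he0 : e ≠ 0) (hee : μ e e = e) (hu : ¬ ∀ x, μ e x = x) :
    AlgEquivalent μ rep2 ∨ AlgEquivalent μ rep3 := by
  push_neg at hu
  obtain ⟨v, hv⟩ := hu
  obtain ⟨n, hn⟩ : ∃ n : V2, v - μ e v = n := ⟨_, rfl⟩
  have hn0 : n ≠ 0 := by
    intro h
    exact hv (sub_eq_zero.mp (hn.trans h)).symm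
  have hproj : μ e (μ e v) = μ e v := by rw [← hassoc e e v, hee]
  have hen : μ e n = 0 := by rw [← hn, map_sub, hproj, sub_self]
  have hind_en : ∀ a b : ℝ, a • e + b • n = (0:V2) → a = 0 ∧ b = 0 := by
    intro a b hab
    have h2 : a • e = 0 := by
      have h3 := congrArg (μ e) hab
      simp only [map_add, map_smul, map_zero] at h3
      rw [hee, hen] at h3
      simpa using h3
    have ha : a = 0 := (smul_eq_zero.mp h2).resolve_right he0
    subst ha
    simp only [zero_smul, zero_add] at hab
    exact ⟨rfl, (smul_eq_zero.mp hab).resolve_right hn0⟩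
  obtain ⟨γ, δ, hnn⟩ := span2 e n he0 hind_en (μ n n)
  have hγ : γ = 0 := by
    have h1 : μ e (μ n n) = 0 := by
      rw [← hassoc e n n, hen]
      simp
    rw [hnn] at h1
    simp only [map_add, map_smul] at h1
    rw [hee, hen] at h1
    simp only [smul_zero, add_zero] at h1
    exact (smul_eq_zero.mp h1).resolve_right he0
  rw [hγ, zero_smul, zero_add] at hnn
  by_cases hδ : δ = 0
  · left
    rw [hδ, zero_smul] at hnn
    apply equiv_of_table μ rep2 e n hind_en
    intro a b c d
    rw [expand μ hcomm, hee, hen, hnn, rep2_apply]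
    match_scalars <;> ring
  · right
    obtain ⟨n', hn'⟩ : ∃ n' : V2, δ⁻¹ • n = n' := ⟨_, rfl⟩
    have hen' : μ e n' = 0 := by rw [← hn', map_smul, hen, smul_zero]
    have hnn' : μ n' n' = n' := by
      rw [← hn']
      simp only [map_smul, LinearMap.smul_apply]
      rw [hnn]
      match_scalars
      field_simp
    have hind_en' : ∀ a b : ℝ, a • e + b • n' = (0:V2) → a = 0 ∧ b = 0 := by
      intro a b hab
      have h' : a • e + (b * δ⁻¹) • n = (0:V2) := by rw [← hab, ← hn']; module
      obtain ⟨h1, h2⟩ := hind_en _ _ h'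
      exact ⟨h1, by field_simp at h2; simpa using h2⟩
    apply equiv_of_table μ rep3 e n' hind_en'
    intro a b c d
    rw [expand μ hcomm, hee, hen', hnn', rep3_apply]
    match_scalars <;> ring

end

-- commutativity and associativity of the reps
lemma isCA_rep0 : IsCommAssoc rep0 := by
  constructor <;> intros <;> simp [rep0]
lemma isCA_rep1 : IsCommAssoc rep1 := by
  constructor <;> intros <;> apply Prod.ext <;> simp <;> ring
lemma isCA_rep2 : IsCommAssoc rep2 := by
  constructor <;> intros <;> apply Prod.ext <;> simp <;> ring
lemma isCA_rep3 : IsCommAssoc rep3 := by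
  constructor <;> intros <;> apply Prod.ext <;> simp <;> ring
lemma isCA_rep4 : IsCommAssoc rep4 := by
  constructor <;> intros <;> apply Prod.ext <;> simp <;> ring
lemma isCA_rep5 : IsCommAssoc rep5 := by
  constructor <;> intros <;> apply Prod.ext <;> simp <;> ring

-- invariant properties
def P0 (μ : Mu) : Prop := μ = 0
def P1 (μ : Mu) : Prop := ∀ x y z, μ (μ x y) z = 0
def P2 (μ : Mu) : Prop := ∃ u, ∀ x, μ u x = x
def P3 (μ : Mu) : Prop := ∃ x : V2, x ≠ 0 ∧ μ x x = 0
def P4 (μ : Mu) : Prop := ∃ x y : V2, x ≠ 0 ∧ y ≠ 0 ∧ μ x y = 0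

lemma equiv_symm {μ ν : Mu} (h : AlgEquivalent μ ν) : AlgEquivalent ν μ := by
  obtain ⟨f, hf⟩ := h
  refine ⟨f.symm, fun x y => ?_⟩
  show μ x y = f.symm.symm (ν (f.symm x) (f.symm y))
  rw [LinearEquiv.symm_symm, hf (f.symm x) (f.symm y), f.apply_symm_apply,
    f.apply_symm_apply, f.apply_symm_apply]

lemma p0_inv : ∀ μ ν : Mu, AlgEquivalent μ ν → P0 μ → P0 ν := by
  intro μ ν ⟨f, hf⟩ h0
  exact LinearMap.ext fun x => LinearMap.ext fun y => by
    rw [LinearMap.zero_apply, LinearMap.zero_apply, hf x y, show μ = 0 from h0]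
    simp

lemma p1_inv : ∀ μ ν : Mu, AlgEquivalent μ ν → P1 μ → P1 ν := by
  intro μ ν ⟨f, hf⟩ ht x y z
  rw [hf, hf, f.apply_symm_apply, ht]
  simp

lemma p2_inv : ∀ μ ν : Mu, AlgEquivalent μ ν → P2 μ → P2 ν := by
  intro μ ν ⟨f, hf⟩ ⟨u, hu⟩
  refine ⟨f.symm u, fun x => ?_⟩
  rw [hf, f.apply_symm_apply, hu, f.symm_apply_apply]

lemma p3_inv : ∀ μ ν : Mu, AlgEquivalent μ ν → P3 μ → P3 ν := by
  intro μ ν ⟨f, hf⟩ ⟨x, hx0, hx⟩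
  refine ⟨f.symm x, fun h => hx0 (by simpa using congrArg f h), ?_⟩
  rw [hf, f.apply_symm_apply, hx]
  simp

lemma p4_inv : ∀ μ ν : Mu, AlgEquivalent μ ν → P4 μ → P4 ν := by
  intro μ ν ⟨f, hf⟩ ⟨x, y, hx0, hy0, hxy⟩
  refine ⟨f.symm x, f.symm y, fun h => hx0 (by simpa using congrArg f h),
    fun h => hy0 (by simpa using congrArg f h), ?_⟩
  rw [hf, f.apply_symm_apply, f.apply_symm_apply, hxy]
  simp

lemma distinguish (P : Mu → Prop) (hinv : ∀ μ ν : Mu, AlgEquivalent μ ν → P μ → P ν)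
    (μ ν : Mu) (hμ : P μ) (hν : ¬ P ν) : ¬ AlgEquivalent μ ν :=
  fun h => hν (hinv _ _ h hμ)

-- facts about the reps
lemma hP0_0 : P0 rep0 := rfl
lemma hN1 : ¬ P0 rep1 := by
  intro h
  have := congrArg (fun m : Mu => m (1,1) (1,1)) h
  simp [Prod.ext_iff] at this
lemma hN2 : ¬ P0 rep2 := by
  intro h
  have := congrArg (fun m : Mu => m (1,1) (1,1)) h
  simp [Prod.ext_iff] at this
lemma hN3 : ¬ P0 rep3 := by
  intro h
  have := congrArg (fun m : Mu => m (1,1) (1,1)) h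
  simp [Prod.ext_iff] at this
lemma hN4 : ¬ P0 rep4 := by
  intro h
  have := congrArg (fun m : Mu => m (1,1) (1,1)) h
  simp [Prod.ext_iff] at this
lemma hN5 : ¬ P0 rep5 := by
  intro h
  have := congrArg (fun m : Mu => m (1,1) (1,1)) h
  simp [Prod.ext_iff] at this

lemma hT1 : P1 rep1 := by
  intro x y z
  apply Prod.ext <;> simp
lemma hNT2 : ¬ P1 rep2 := by
  intro h
  have := h (1,1) (1,1) (1,1)
  simp [Prod.ext_iff] at this
lemma hNT3 : ¬ P1 rep3 := by
  intro h
  have := h (1,1) (1,1) (1,1)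
  simp [Prod.ext_iff] at this
lemma hNT4 : ¬ P1 rep4 := by
  intro h
  have := h (1,1) (1,1) (1,1)
  simp [Prod.ext_iff] at this
lemma hNT5 : ¬ P1 rep5 := by
  intro h
  have := h (1,1) (1,1) (1,1)
  simp [Prod.ext_iff] at this

lemma hU3 : P2 rep3 := ⟨(1,1), fun x => by apply Prod.ext <;> simp⟩
lemma hU4 : P2 rep4 := ⟨(1,0), fun x => by apply Prod.ext <;> simp⟩
lemma hU5 : P2 rep5 := ⟨(1,0), fun x => by apply Prod.ext <;> simp⟩
lemma hNU1 : ¬ P2 rep1 := by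
  rintro ⟨u, hu⟩
  have := hu (1,0)
  simp [Prod.ext_iff] at this
lemma hNU2 : ¬ P2 rep2 := by
  rintro ⟨u, hu⟩
  have := hu (0,1)
  simp [Prod.ext_iff] at this

lemma hS5 : P3 rep5 := ⟨(0,1), by simp [Prod.ext_iff], by apply Prod.ext <;> simp⟩
lemma hNS3 : ¬ P3 rep3 := by
  rintro ⟨x, hx, h⟩
  rw [Prod.ext_iff] at h
  simp only [rep3_apply, Prod.fst_zero, Prod.snd_zero] at h
  exact hx (Prod.ext (mul_self_eq_zero.mp h.1) (mul_self_eq_zero.mp h.2))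
lemma hNS4 : ¬ P3 rep4 := by
  rintro ⟨x, hx, h⟩
  rw [Prod.ext_iff] at h
  simp only [rep4_apply, Prod.fst_zero, Prod.snd_zero] at h
  obtain ⟨h1, h2⟩ := h
  have h2' : x.1 * x.2 = 0 := by linarith
  rcases mul_eq_zero.mp h2' with h | h
  · exact hx (Prod.ext h (mul_self_eq_zero.mp (by nlinarith)))
  · exact hx (Prod.ext (mul_self_eq_zero.mp (by nlinarith)) h)

lemma hZ3 : P4 rep3 := ⟨(1,0), (0,1), by simp [Prod.ext_iff], by simp [Prod.ext_iff],
  by apply Prod.ext <;> simp⟩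
lemma hNZ4 : ¬ P4 rep4 := by
  rintro ⟨x, y, hx, hy, h⟩
  rw [Prod.ext_iff] at h
  simp only [rep4_apply, Prod.fst_zero, Prod.snd_zero] at h
  obtain ⟨h1, h2⟩ := h
  have k1 : x.1 * (y.1^2 + y.2^2) = 0 := by linear_combination y.1*h1 + y.2*h2
  have k2 : x.2 * (y.1^2 + y.2^2) = 0 := by linear_combination y.1*h2 - y.2*h1
  have hy2 : y.1^2 + y.2^2 ≠ 0 := by
    intro h0
    refine hy (Prod.ext ?_ ?_)
    · show y.1 = (0:ℝ×ℝ).1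
      simp only [Prod.fst_zero]
      nlinarith [sq_nonneg y.1, sq_nonneg y.2]
    · show y.2 = (0:ℝ×ℝ).2
      simp only [Prod.snd_zero]
      nlinarith [sq_nonneg y.1, sq_nonneg y.2]
  exact hx (Prod.ext ((mul_eq_zero.mp k1).resolve_right hy2)
    ((mul_eq_zero.mp k2).resolve_right hy2))

lemma distinguish' (P : Mu → Prop) (hinv : ∀ μ ν : Mu, AlgEquivalent μ ν → P μ → P ν)
    (μ ν : Mu) (hμ : P μ) (hν : ¬ P ν) : ¬ AlgEquivalent ν μ :=
  fun h => hν (hinv _ _ (equiv_symm h) hμ)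

end Stmt5Aux

open Stmt5Aux in
/-- Up to isomorphism there are exactly 6 commutative associative real algebra
structures on a 2-dimensional real vector space. -/
theorem stmt_5 :
    ∃ reps : Fin 6 → ((ℝ × ℝ) →ₗ[ℝ] (ℝ × ℝ) →ₗ[ℝ] (ℝ × ℝ)),
      (∀ i, IsCommAssoc (reps i)) ∧
      (∀ i j, i ≠ j → ¬ AlgEquivalent (reps i) (reps j)) ∧
      (∀ μ, IsCommAssoc μ → ∃ i, AlgEquivalent μ (reps i)) := by
  refine ⟨![rep0, rep1, rep2, rep3, rep4, rep5], ?_, ?_, ?_⟩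
  · intro i
    fin_cases i
    exacts [isCA_rep0, isCA_rep1, isCA_rep2, isCA_rep3, isCA_rep4, isCA_rep5]
  · intro i j hij
    fin_cases i <;> fin_cases j
    exacts [absurd rfl hij,
      distinguish P0 p0_inv _ _ hP0_0 hN1,
      distinguish P0 p0_inv _ _ hP0_0 hN2,
      distinguish P0 p0_inv _ _ hP0_0 hN3,
      distinguish P0 p0_inv _ _ hP0_0 hN4,
      distinguish P0 p0_inv _ _ hP0_0 hN5,
      distinguish' P0 p0_inv _ _ hP0_0 hN1,
      absurd rfl hij,
      distinguish P1 p1_inv _ _ hT1 hNT2,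
      distinguish P1 p1_inv _ _ hT1 hNT3,
      distinguish P1 p1_inv _ _ hT1 hNT4,
      distinguish P1 p1_inv _ _ hT1 hNT5,
      distinguish' P0 p0_inv _ _ hP0_0 hN2,
      distinguish' P1 p1_inv _ _ hT1 hNT2,
      absurd rfl hij,
      distinguish' P2 p2_inv _ _ hU3 hNU2,
      distinguish' P2 p2_inv _ _ hU4 hNU2,
      distinguish' P2 p2_inv _ _ hU5 hNU2,
      distinguish' P0 p0_inv _ _ hP0_0 hN3,
      distinguish' P1 p1_inv _ _ hT1 hNT3,
      distinguish P2 p2_inv _ _ hU3 hNU2,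
      absurd rfl hij,
      distinguish P4 p4_inv _ _ hZ3 hNZ4,
      distinguish' P3 p3_inv _ _ hS5 hNS3,
      distinguish' P0 p0_inv _ _ hP0_0 hN4,
      distinguish' P1 p1_inv _ _ hT1 hNT4,
      distinguish P2 p2_inv _ _ hU4 hNU2,
      distinguish' P4 p4_inv _ _ hZ3 hNZ4,
      absurd rfl hij,
      distinguish' P3 p3_inv _ _ hS5 hNS4,
      distinguish' P0 p0_inv _ _ hP0_0 hN5,
      distinguish' P1 p1_inv _ _ hT1 hNT5,
      distinguish P2 p2_inv _ _ hU5 hNU2,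
      distinguish P3 p3_inv _ _ hS5 hNS3,
      distinguish P3 p3_inv _ _ hS5 hNS4,
      absurd rfl hij]
  · intro μ hμ
    obtain ⟨hcomm, hassoc⟩ := hμ
    by_cases h0 : μ = 0
    · refine ⟨0, LinearEquiv.refl ℝ (ℝ × ℝ), fun x y => ?_⟩
      show rep0 x y = _
      simp [rep0, h0]
    · by_cases hid : ∃ e : Stmt5Aux.V2, e ≠ 0 ∧ μ e e = e
      · obtain ⟨e, he0, hee⟩ := hid
        by_cases hu : ∀ x, μ e x = x
        · rcases idem_unital μ hcomm hassoc e he0 hee hu with h | h | h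
          exacts [⟨3, h⟩, ⟨4, h⟩, ⟨5, h⟩]
        · rcases idem_nonunital μ hcomm hassoc e he0 hee hu with h | h
          exacts [⟨2, h⟩, ⟨3, h⟩]
      · exact ⟨1, no_idem μ hcomm hassoc h0 hid⟩
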